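/- Let N ≥ 1 and let U : Matrix (Fin N) (Fin N) ℂ be a unitary matrix. Suppose v : Fin N → (Fin N → ℂ) is an orthonormal basis of eigenvectors of U with U *ᵥ (v j) = λ j • (v j) for scalars λ : Fin N → ℂ. For each j, let W j be a unitary matrix with W j *ᵥ e_j = v j, where e_j is the j-th standard basis vector, and let P j = 1 + (λ j − 1) • E_j, where E_j is the matrix with entry 1 at position (j,j) and 0 elsewhere. Then U = ∏_{j=0}^{N−1} (W j * P j * (W j)ᴴ), the product taken in increasing order of j. -/

import Mathlib

open Matrix

/-- Eigendecomposition-based factorization (Appendix B, eq:spectraldecomposition):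
`U = ∏ⱼ Wⱼ Pⱼ Wⱼᴴ` where `Wⱼ` carries `|j⟩` to the eigenvector `vⱼ` and `Pⱼ`
phases the `j`-th basis state by the eigenvalue `λⱼ`. -/
theorem spectral_factorization (N : ℕ) (hN : 1 ≤ N)
    (U : Matrix (Fin N) (Fin N) ℂ) (hU : Uᴴ * U = 1)
    (v : Fin N → (Fin N → ℂ))
    (horth : ∀ j j' : Fin N,
      (∑ i, (starRingEnd ℂ) (v j i) * v j' i) = if j = j' then 1 else 0)
    (hspan : Submodule.span ℂ (Set.range v) = ⊤)
    (lam : Fin N → ℂ)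
    (heig : ∀ j, U.mulVec (v j) = lam j • v j)
    (W : Fin N → Matrix (Fin N) (Fin N) ℂ)
    (hWu : ∀ j, (W j)ᴴ * W j = 1)
    (hWe : ∀ j, (W j).mulVec (fun i => if i = j then 1 else 0) = v j)
    (P : Fin N → Matrix (Fin N) (Fin N) ℂ)
    (hP : ∀ j, P j = 1 + (lam j - 1) • Matrix.single j j 1) :
    U = (List.ofFn fun j : Fin N => W j * P j * (W j)ᴴ).prod := by
  set e : Fin N → Fin N → ℂ := fun j i => if i = j then 1 else 0 with he
  set F : Fin N → Matrix (Fin N) (Fin N) ℂ := fun j => W j * P j * (W j)ᴴ with hF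
  have hWW : ∀ j, W j * (W j)ᴴ = 1 := fun j => mul_eq_one_comm.mp (hWu j)
  -- columns of W j
  have hWcol : ∀ j i, W j i j = v j i := by
    intro j i
    have := congrFun (hWe j) i
    simpa [Matrix.mulVec, dotProduct, he] using this
  -- j-th entry of (W j)ᴴ *ᵥ v k
  have hentry : ∀ j k, ((W j)ᴴ *ᵥ v k) j = if j = k then 1 else 0 := by
    intro j k
    have : ((W j)ᴴ *ᵥ v k) j = ∑ i, (starRingEnd ℂ) (v j i) * v k i := by
      simp [Matrix.mulVec, dotProduct, Matrix.conjTranspose_apply, hWcol]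
    rw [this, horth]
  -- e j as update
  have heupd : ∀ j : Fin N, Function.update (0 : Fin N → ℂ) j 1 = e j := by
    intro j; funext i
    by_cases h : i = j <;> simp [Function.update, h, he]
  -- P j action
  have hPv : ∀ (j : Fin N) (x : Fin N → ℂ),
      P j *ᵥ x = x + ((lam j - 1) * x j) • e j := by
    intro j x
    rw [hP j, Matrix.add_mulVec, Matrix.one_mulVec, Matrix.smul_mulVec,
      Matrix.single_mulVec]
    funext i
    by_cases h : i = j <;> simp [Function.update, h, he, mul_comm]
  -- key: action of each factor on eigenvectors
  have hkey : ∀ j k, F j *ᵥ v k = if k = j then lam j • v j else v k := by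
    intro j k
    have hstep : F j *ᵥ v k = W j *ᵥ (P j *ᵥ ((W j)ᴴ *ᵥ v k)) := by
      simp [hF, Matrix.mulVec_mulVec, Matrix.mul_assoc]
    by_cases h : k = j
    · subst h
      have hx : (W k)ᴴ *ᵥ v k = e k := by
        rw [← hWe k, Matrix.mulVec_mulVec, hWu k, Matrix.one_mulVec]
      have hPe : P k *ᵥ e k = lam k • e k := by
        rw [hPv]
        funext i
        by_cases h : i = k <;> simp [he, h] <;> ring
      rw [hstep, hx, hPe, Matrix.mulVec_smul, hWe]
      simp
    · have hx0 : ((W j)ᴴ *ᵥ v k) j = 0 := by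
        rw [hentry]; simp [Ne.symm h]
      have : P j *ᵥ ((W j)ᴴ *ᵥ v k) = (W j)ᴴ *ᵥ v k := by
        rw [hPv, hx0]; simp
      rw [hstep, this, Matrix.mulVec_mulVec, hWW, Matrix.one_mulVec]
      simp [h]
  -- product over a nodup list
  have hlist : ∀ (l : List (Fin N)), l.Nodup → ∀ k,
      (l.map F).prod *ᵥ v k = if k ∈ l then lam k • v k else v k := by
    intro l
    induction l with
    | nil => intro _ k; simp
    | cons j t ih =>
      intro hnd k
      have hndt := (List.nodup_cons.mp hnd).2
      have hjt := (List.nodup_cons.mp hnd).1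
      have ihk := ih hndt k
      rw [List.map_cons, List.prod_cons, ← Matrix.mulVec_mulVec, ihk]
      by_cases hk : k ∈ t
      · have hkj : k ≠ j := fun h => hjt (h ▸ hk)
        rw [if_pos hk, Matrix.mulVec_smul, hkey, if_neg hkj]
        simp [List.mem_cons, hk]
      · rw [if_neg hk, hkey]
        by_cases hkj : k = j
        · subst hkj; simp
        · simp [List.mem_cons, hkj, hk]
  have hM : ∀ k, (List.ofFn F).prod *ᵥ v k = lam k • v k := by
    intro k
    have := hlist (List.finRange N) (List.nodup_finRange N) k
    rw [List.ofFn_eq_map]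
    rw [this, if_pos (List.mem_finRange k)]
  -- U and the product agree as linear maps
  have hLM : U.mulVecLin = ((List.ofFn F).prod).mulVecLin := by
    apply LinearMap.ext_on hspan
    rintro x ⟨k, rfl⟩
    simp only [Matrix.mulVecLin_apply]
    rw [heig k, hM k]
  -- conclude matrix equality
  ext i j
  have h1 := congrFun (congrArg (fun f => f.toFun (Pi.single j (1:ℂ))) hLM) i
  simpa [Matrix.mulVecLin_apply, Matrix.mulVec_single] using h1
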